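/- For p ∈ (1, ∞), the function Q̃_p(q) := 2E_{1,p}(q) - K_{1,p}(q) is strictly decreasing and strictly concave on [0, 1), and if p > 2 then lim_{q↑1} Q̃_p(q) = -K_{1,p}(1)/(p - 1), which is a finite negative number. -/

import Mathlib

open Real Filter

/-- The complete `p`-elliptic integral of the first kind. -/
noncomputable def K1 (p q : ℝ) : ℝ :=
  ∫ z in (0:ℝ)..1, (1 - q ^ 2 * z ^ 2) ^ (-(1/2) : ℝ) * (1 - z ^ 2) ^ (-(1 / p))

/-- The complete `p`-elliptic integral of the second kind. -/
noncomputable def E1 (p q : ℝ) : ℝ :=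
  ∫ z in (0:ℝ)..1, (1 - q ^ 2 * z ^ 2) ^ ((1/2) : ℝ) * (1 - z ^ 2) ^ (-(1 / p))

/-- The function `Q̃_p`. -/
noncomputable def Qt (p q : ℝ) : ℝ := 2 * E1 p q - K1 p q

/-- `K_{1,p}(1)` for `p > 2`. -/
noncomputable def K1one (p : ℝ) : ℝ :=
  ∫ z in (0:ℝ)..1, (1 - z ^ 2) ^ (-(1/2) - 1 / p)

namespace QtAux

open MeasureTheory Set intervalIntegral

noncomputable def g (u : ℝ) : ℝ :=
  2 * (1 - u ^ 2) ^ ((1/2) : ℝ) - (1 - u ^ 2) ^ (-(1/2) : ℝ)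

noncomputable def g1 (u : ℝ) : ℝ :=
  -2 * u * (1 - u ^ 2) ^ (-(1/2) : ℝ) - u * (1 - u ^ 2) ^ (-(3/2) : ℝ)

lemma hasDerivAt_base (u : ℝ) : HasDerivAt (fun x : ℝ => 1 - x ^ 2) (-(2 * u)) u := by
  simpa using (hasDerivAt_pow 2 u).const_sub 1

lemma hasDerivAt_g {u : ℝ} (ht : 0 < 1 - u ^ 2) : HasDerivAt g (g1 u) u := by
  have hb := hasDerivAt_base u
  have h1 := hb.rpow_const (p := ((1/2) : ℝ)) (Or.inl ht.ne')
  have h2 := hb.rpow_const (p := (-(1/2) : ℝ)) (Or.inl ht.ne')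
  have h := (h1.const_mul 2).sub h2
  refine h.congr_deriv ?_
  have e1 : ((1/2) - 1 : ℝ) = -(1/2) := by norm_num
  have e2 : (-(1/2) - 1 : ℝ) = -(3/2) := by norm_num
  rw [e1, e2]
  simp only [g1]
  ring

lemma hasDerivAt_g1 {u : ℝ} (ht : 0 < 1 - u ^ 2) :
    HasDerivAt g1 (-3 * (1 - u ^ 2) ^ (-(5/2) : ℝ)) u := by
  have hb := hasDerivAt_base u
  have hr1 := hb.rpow_const (p := (-(1/2) : ℝ)) (Or.inl ht.ne')
  have hr2 := hb.rpow_const (p := (-(3/2) : ℝ)) (Or.inl ht.ne')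
  have hA : HasDerivAt (fun x : ℝ => -2 * x) (-2) u := by
    simpa using (hasDerivAt_id u).const_mul (-2)
  have h := (hA.mul hr1).sub ((hasDerivAt_id' (x := u)).mul hr2)
  refine h.congr_deriv ?_
  have e1 : (-(1/2) - 1 : ℝ) = -(3/2) := by norm_num
  have e2 : (-(3/2) - 1 : ℝ) = -(5/2) := by norm_num
  rw [e1, e2]
  have E1 : (1 - u ^ 2) ^ (-(1/2) : ℝ)
      = (1 - u ^ 2) ^ (2 : ℕ) * (1 - u ^ 2) ^ (-(5/2) : ℝ) := by
    rw [← Real.rpow_natCast (1 - u ^ 2) 2, ← Real.rpow_add ht]; norm_num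
  have E2 : (1 - u ^ 2) ^ (-(3/2) : ℝ)
      = (1 - u ^ 2) * (1 - u ^ 2) ^ (-(5/2) : ℝ) := by
    rw [show ((1 - u ^ 2) * (1 - u ^ 2) ^ (-(5/2) : ℝ))
        = (1 - u ^ 2) ^ ((1:ℝ) + -(5/2)) by rw [Real.rpow_add ht, Real.rpow_one]]
    norm_num
  rw [E1, E2]
  ring

lemma pos_of_mem {u : ℝ} (hu : u ∈ Set.Ico (0:ℝ) 1) : 0 < 1 - u ^ 2 := by
  nlinarith [hu.1, hu.2]

lemma g_cont : ContinuousOn g (Set.Ico (0:ℝ) 1) := fun _ hu =>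
  ((hasDerivAt_g (pos_of_mem hu)).continuousAt).continuousWithinAt

lemma g_anti : StrictAntiOn g (Set.Ico (0:ℝ) 1) := by
  apply strictAntiOn_of_deriv_neg (convex_Ico 0 1) g_cont
  intro u hu
  rw [interior_Ico] at hu
  have ht : 0 < 1 - u ^ 2 := by nlinarith [hu.1, hu.2]
  rw [(hasDerivAt_g ht).deriv]
  have h1 := Real.rpow_pos_of_pos ht (-(1/2) : ℝ)
  have h2 := Real.rpow_pos_of_pos ht (-(3/2) : ℝ)
  have hu0 := hu.1
  simp only [g1]
  nlinarith

lemma g_concave : StrictConcaveOn ℝ (Set.Ico (0:ℝ) 1) g := by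
  apply strictConcaveOn_of_deriv2_neg (convex_Ico 0 1) g_cont
  intro u hu
  rw [interior_Ico] at hu
  have ht : 0 < 1 - u ^ 2 := by nlinarith [hu.1, hu.2]
  have hev : deriv g =ᶠ[nhds u] g1 := by
    have hmem : Set.Ioo (-1:ℝ) 1 ∈ nhds u :=
      isOpen_Ioo.mem_nhds ⟨by linarith [hu.1], hu.2⟩
    filter_upwards [hmem] with v hv
    exact (hasDerivAt_g (by nlinarith [hv.1, hv.2])).deriv
  show deriv (deriv g) u < 0
  rw [hev.deriv_eq, (hasDerivAt_g1 ht).deriv]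
  have := Real.rpow_pos_of_pos ht (-(5/2) : ℝ)
  nlinarith

lemma integrable_one_sub (c : ℝ) (hc : -1 < c) :
    IntervalIntegrable (fun z : ℝ => (1 - z) ^ c) volume 0 1 := by
  have h := (intervalIntegrable_rpow' (a := 0) (b := 1) hc).comp_sub_left 1
  exact (by simpa using h : IntervalIntegrable _ volume 1 0).symm

lemma key_integrable {c : ℝ} (hc : -1 < c) (hc0 : c ≤ 0) {φ : ℝ → ℝ} {C : ℝ}
    (hφc : ContinuousOn φ (Set.Ioo (0:ℝ) 1))
    (hφ : ∀ z ∈ Set.Ioc (0:ℝ) 1, |φ z| ≤ C) :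
    IntervalIntegrable (fun z => φ z * (1 - z ^ 2) ^ c) volume 0 1 := by
  rw [intervalIntegrable_iff_integrableOn_Ioc_of_le zero_le_one]
  have hC : 0 ≤ C := le_trans (abs_nonneg _) (hφ 1 ⟨one_pos, le_rfl⟩)
  have hmeas : AEStronglyMeasurable (fun z => φ z * (1 - z ^ 2) ^ c)
      (volume.restrict (Set.Ioc (0:ℝ) 1)) := by
    rw [← Measure.restrict_congr_set Ioo_ae_eq_Ioc]
    apply ContinuousOn.aestronglyMeasurable _ measurableSet_Ioo
    apply hφc.mul
    intro z hz
    have ht : 0 < 1 - z ^ 2 := by nlinarith [hz.1, hz.2]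
    exact (((continuousAt_const.sub ((continuousAt_id).pow 2)).rpow_const
      (Or.inl ht.ne')).continuousWithinAt)
  refine Integrable.mono' (g := fun z => C * (1 - z) ^ c) ?_ hmeas ?_
  · exact ((intervalIntegrable_iff_integrableOn_Ioc_of_le zero_le_one).1
      (integrable_one_sub c hc)).const_mul C
  · filter_upwards [ae_restrict_mem measurableSet_Ioc] with z hz
    have h02 : 0 ≤ 1 - z ^ 2 := by nlinarith [hz.1, hz.2]
    have hb : (1 - z ^ 2) ^ c ≤ (1 - z) ^ c := by
      rcases eq_or_lt_of_le hz.2 with h1 | h1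
      · subst h1; norm_num
      · exact Real.rpow_le_rpow_of_nonpos (by linarith) (by nlinarith [hz.1]) hc0
    have hnn : 0 ≤ (1 - z ^ 2) ^ c := Real.rpow_nonneg h02 c
    calc ‖φ z * (1 - z ^ 2) ^ c‖ = |φ z| * (1 - z ^ 2) ^ c := by
          rw [norm_mul, Real.norm_eq_abs, Real.norm_eq_abs, abs_of_nonneg hnn]
      _ ≤ C * (1 - z) ^ c := by
          apply mul_le_mul (hφ z hz) hb hnn hC

variable {p q : ℝ}

lemma exp_neg1 (hp : 1 < p) : (-1 : ℝ) < -(1/p) := by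
  have h0 : (0:ℝ) < p := by linarith
  have : 1/p < 1 := by rw [div_lt_one h0]; exact hp
  linarith

lemma exp_neg0 (hp : 1 < p) : -(1/p) ≤ (0:ℝ) := by
  have h0 : (0:ℝ) < p := by linarith
  have : 0 < 1/p := by positivity
  linarith

lemma sq_bound {z : ℝ} (hq : q ∈ Set.Ico (0:ℝ) 1) (hz : z ∈ Set.Ioc (0:ℝ) 1) :
    0 < 1 - q ^ 2 ∧ 1 - q ^ 2 ≤ 1 - q ^ 2 * z ^ 2 ∧ 1 - q ^ 2 * z ^ 2 ≤ 1 := by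
  have h1 : 0 ≤ q := hq.1
  have h2 : q < 1 := hq.2
  have h3 : 0 < z := hz.1
  have h4 : z ≤ 1 := hz.2
  have hz2 : z ^ 2 ≤ 1 := by nlinarith
  refine ⟨by nlinarith, by nlinarith [sq_nonneg q], by nlinarith [sq_nonneg q, sq_nonneg z]⟩

lemma contOn_sq (c : ℝ) (hq : q ∈ Set.Ico (0:ℝ) 1) :
    ContinuousOn (fun z : ℝ => (1 - q ^ 2 * z ^ 2) ^ c) (Set.Ioo (0:ℝ) 1) := by
  intro z hz
  have h := (sq_bound hq ⟨hz.1, hz.2.le⟩).1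
  have hpos : 0 < 1 - q ^ 2 * z ^ 2 := lt_of_lt_of_le h (sq_bound hq ⟨hz.1, hz.2.le⟩).2.1
  exact ((continuousAt_const.sub (continuousAt_const.mul
    ((continuousAt_id).pow 2))).rpow_const (Or.inl hpos.ne')).continuousWithinAt

lemma integrable_K (hp : 1 < p) (hq : q ∈ Set.Ico (0:ℝ) 1) :
    IntervalIntegrable
      (fun z => (1 - q ^ 2 * z ^ 2) ^ (-(1/2) : ℝ) * (1 - z ^ 2) ^ (-(1 / p)))
      volume 0 1 := by
  apply key_integrable (exp_neg1 hp) (exp_neg0 hp) (contOn_sq _ hq)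
    (C := (1 - q ^ 2) ^ (-(1/2) : ℝ))
  intro z hz
  obtain ⟨h1, h2, _⟩ := sq_bound hq hz
  rw [abs_of_nonneg (Real.rpow_nonneg (by linarith) _)]
  exact Real.rpow_le_rpow_of_nonpos h1 h2 (by norm_num)

lemma integrable_E (hp : 1 < p) (hq : q ∈ Set.Ico (0:ℝ) 1) :
    IntervalIntegrable
      (fun z => (1 - q ^ 2 * z ^ 2) ^ ((1/2) : ℝ) * (1 - z ^ 2) ^ (-(1 / p)))
      volume 0 1 := by
  apply key_integrable (exp_neg1 hp) (exp_neg0 hp) (contOn_sq _ hq) (C := 1)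
  intro z hz
  obtain ⟨h1, h2, h3⟩ := sq_bound hq hz
  rw [abs_of_nonneg (Real.rpow_nonneg (by linarith) _)]
  exact Real.rpow_le_one (by linarith) h3 (by norm_num)

lemma integrable_gw (hp : 1 < p) (hq : q ∈ Set.Ico (0:ℝ) 1) :
    IntervalIntegrable (fun z => g (q * z) * (1 - z ^ 2) ^ (-(1 / p))) volume 0 1 := by
  apply key_integrable (exp_neg1 hp) (exp_neg0 hp)
    (C := 2 + (1 - q ^ 2) ^ (-(1/2) : ℝ))
  · simp only [g]
    intro z hz
    have h := (sq_bound hq ⟨hz.1, hz.2.le⟩)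
    have hpos : 0 < 1 - q ^ 2 * z ^ 2 := lt_of_lt_of_le h.1 h.2.1
    have hb : ContinuousAt (fun z : ℝ => 1 - (q * z) ^ 2) z := by fun_prop
    have hne : (1 - (q * z) ^ 2) ≠ 0 := by rw [mul_pow]; exact hpos.ne'
    have c1 : ContinuousAt (fun x : ℝ => 2 * (1 - (q*x)^2) ^ ((1/2):ℝ)) z :=
      (hb.rpow_const (Or.inl hne)).const_mul 2
    have c2 : ContinuousAt (fun x : ℝ => (1 - (q*x)^2) ^ (-(1/2):ℝ)) z :=
      hb.rpow_const (Or.inl hne)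
    exact (c1.sub c2).continuousWithinAt
  · intro z hz
    obtain ⟨h1, h2, h3⟩ := sq_bound hq hz
    have hpos : 0 < 1 - q ^ 2 * z ^ 2 := lt_of_lt_of_le h1 h2
    have e : (q * z) ^ 2 = q ^ 2 * z ^ 2 := by ring
    have b1 : (1 - (q*z) ^ 2) ^ ((1/2) : ℝ) ≤ 1 := by
      rw [e]; exact Real.rpow_le_one (by linarith) h3 (by norm_num)
    have b2 : (1 - (q*z) ^ 2) ^ (-(1/2) : ℝ) ≤ (1 - q ^ 2) ^ (-(1/2) : ℝ) := by
      rw [e]; exact Real.rpow_le_rpow_of_nonpos h1 h2 (by norm_num)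
    have n1 : 0 ≤ (1 - (q*z) ^ 2) ^ ((1/2) : ℝ) := Real.rpow_nonneg (by rw [e]; linarith) _
    have n2 : 0 ≤ (1 - (q*z) ^ 2) ^ (-(1/2) : ℝ) := Real.rpow_nonneg (by rw [e]; linarith) _
    simp only [g]
    rw [abs_sub_comm]
    calc |(1 - (q*z)^2) ^ (-(1/2):ℝ) - 2 * (1 - (q*z)^2) ^ ((1/2):ℝ)|
        ≤ |(1 - (q*z)^2) ^ (-(1/2):ℝ)| + |2 * (1 - (q*z)^2) ^ ((1/2):ℝ)| := abs_sub _ _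
      _ ≤ 2 + (1 - q ^ 2) ^ (-(1/2) : ℝ) := by
          rw [abs_of_nonneg n2, abs_of_nonneg (by positivity)]
          nlinarith

lemma Qt_eq (hp : 1 < p) (hq : q ∈ Set.Ico (0:ℝ) 1) :
    Qt p q = ∫ z in (0:ℝ)..1, g (q * z) * (1 - z ^ 2) ^ (-(1 / p)) := by
  have hE := integrable_E hp hq
  have hK := integrable_K hp hq
  rw [Qt, E1, K1, ← intervalIntegral.integral_const_mul,
    ← intervalIntegral.integral_sub (hE.const_mul 2) hK]
  apply intervalIntegral.integral_congr
  intro z _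
  simp only [g, mul_pow]
  ring

lemma mem_scale {x z : ℝ} (hx : x ∈ Set.Ico (0:ℝ) 1) (hz : z ∈ Set.Ioo (0:ℝ) 1) :
    x * z ∈ Set.Ico (0:ℝ) 1 := by
  constructor
  · exact mul_nonneg hx.1 hz.1.le
  · nlinarith [hx.1, hx.2, hz.1, hz.2]

lemma w_pos {z : ℝ} (hz : z ∈ Set.Ioo (0:ℝ) 1) (p : ℝ) :
    0 < (1 - z ^ 2) ^ (-(1 / p)) :=
  Real.rpow_pos_of_pos (by nlinarith [hz.1, hz.2]) _

lemma Qt_anti (hp : 1 < p) : StrictAntiOn (Qt p) (Set.Ico (0:ℝ) 1) := by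
  intro x hx y hy hxy
  rw [Qt_eq hp hx, Qt_eq hp hy, ← sub_pos,
    ← intervalIntegral.integral_sub (integrable_gw hp hx) (integrable_gw hp hy)]
  apply intervalIntegral_pos_of_pos_on
    ((integrable_gw hp hx).sub (integrable_gw hp hy)) _ one_pos
  intro z hz
  have h1 : g (y * z) < g (x * z) := by
    apply g_anti (mem_scale hx hz) (mem_scale hy hz)
    exact mul_lt_mul_of_pos_right hxy hz.1
  have h2 := w_pos hz p
  nlinarith

lemma Qt_concave (hp : 1 < p) : StrictConcaveOn ℝ (Set.Ico (0:ℝ) 1) (Qt p) := by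
  refine ⟨convex_Ico 0 1, fun x hx y hy hxy a b ha hb hab => ?_⟩
  simp only [smul_eq_mul]
  have hab' : a * x + b * y ∈ Set.Ico (0:ℝ) 1 :=
    (convex_Ico 0 1) hx hy ha.le hb.le hab
  have key : 0 < ∫ z in (0:ℝ)..1,
      (g ((a * x + b * y) * z) * (1 - z ^ 2) ^ (-(1 / p))
        - (a * (g (x * z) * (1 - z ^ 2) ^ (-(1 / p)))
          + b * (g (y * z) * (1 - z ^ 2) ^ (-(1 / p))))) := by
    apply intervalIntegral_pos_of_pos_on
      ((integrable_gw hp hab').sub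
        (((integrable_gw hp hx).const_mul a).add ((integrable_gw hp hy).const_mul b)))
      _ one_pos
    intro z hz
    have h1 : a • g (x * z) + b • g (y * z) < g (a • (x * z) + b • (y * z)) := by
      apply g_concave.2 (mem_scale hx hz) (mem_scale hy hz) _ ha hb hab
      intro h
      exact hxy (mul_right_cancel₀ hz.1.ne' h)
    simp only [smul_eq_mul] at h1
    have h2 := w_pos hz p
    have e : a * (x * z) + b * (y * z) = (a * x + b * y) * z := by ring
    rw [e] at h1
    nlinarith
  rw [intervalIntegral.integral_sub (integrable_gw hp hab')
      (((integrable_gw hp hx).const_mul a).add ((integrable_gw hp hy).const_mul b)),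
    intervalIntegral.integral_add ((integrable_gw hp hx).const_mul a)
      ((integrable_gw hp hy).const_mul b),
    intervalIntegral.integral_const_mul, intervalIntegral.integral_const_mul] at key
  rw [Qt_eq hp hx, Qt_eq hp hy, Qt_eq hp hab']
  linarith

section Limit

variable (hp2 : 2 < p)
include hp2

lemma ha_pos : (0:ℝ) < (1/2) - 1/p := by
  have h0 : (0:ℝ) < p := by linarith
  have : 1/p < 1/2 := by rw [div_lt_div_iff₀ h0 (by norm_num)]; linarith
  linarith

lemma hb_exp : (-1:ℝ) < -(1/2) - 1/p := by
  have := ha_pos hp2; linarith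

lemma hb_exp0 : (-(1/2) - 1/p : ℝ) ≤ 0 := by
  have := ha_pos hp2; have : (0:ℝ) < 1/p := by positivity
  linarith

lemma hA_int : IntervalIntegrable (fun z : ℝ => (1 - z ^ 2) ^ ((1/2) - 1/p : ℝ)) volume 0 1 := by
  apply Continuous.intervalIntegrable
  rw [continuous_iff_continuousAt]
  intro z
  exact (continuousAt_const.sub (continuousAt_id.pow 2)).rpow_const (Or.inr (ha_pos hp2).le)

lemma hB_int : IntervalIntegrable (fun z : ℝ => (1 - z ^ 2) ^ (-(1/2) - 1/p : ℝ)) volume 0 1 := by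
  have h := key_integrable (hb_exp hp2) (hb_exp0 hp2) (φ := fun _ => 1) (C := 1)
    continuousOn_const (by intro z _; norm_num)
  simpa using h

lemma ftc_zero :
    ∫ z in (0:ℝ)..1, ((2 - 2/p) * (1 - z ^ 2) ^ ((1/2) - 1/p : ℝ)
      - (1 - 2/p) * (1 - z ^ 2) ^ (-(1/2) - 1/p : ℝ)) = 0 := by
  set D : ℝ → ℝ := fun z => (2 - 2/p) * (1 - z ^ 2) ^ ((1/2) - 1/p : ℝ)
      - (1 - 2/p) * (1 - z ^ 2) ^ (-(1/2) - 1/p : ℝ) with hD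
  have hD_int : IntervalIntegrable D volume 0 1 :=
    ((hA_int hp2).const_mul _).sub ((hB_int hp2).const_mul _)
  haveI : (nhdsWithin (1:ℝ) (Set.Ioo (0:ℝ) 1)).NeBot :=
    right_nhdsWithin_Ioo_neBot zero_lt_one
  have hEq : (fun b => ∫ z in (0:ℝ)..b, D z)
      =ᶠ[nhdsWithin (1:ℝ) (Set.Ioo (0:ℝ) 1)]
      (fun b => b * (1 - b ^ 2) ^ ((1/2) - 1/p : ℝ)) := by
    filter_upwards [self_mem_nhdsWithin] with b hb
    have hderiv : ∀ z ∈ Set.uIcc (0:ℝ) b,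
        HasDerivAt (fun z : ℝ => z * (1 - z ^ 2) ^ ((1/2) - 1/p : ℝ)) (D z) z := by
      intro z hz
      rw [Set.uIcc_of_le hb.1.le] at hz
      have ht : 0 < 1 - z ^ 2 := by nlinarith [hz.1, hz.2, hb.1, hb.2]
      have h := (hasDerivAt_id' (x := z)).mul
        ((hasDerivAt_base z).rpow_const (p := ((1/2) - 1/p : ℝ)) (Or.inl ht.ne'))
      refine h.congr_deriv ?_
      have e : ((1/2) - 1/p - 1 : ℝ) = -(1/2) - 1/p := by ring
      rw [e]
      have E : (1 - z ^ 2) ^ ((1/2) - 1/p : ℝ)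
          = (1 - z ^ 2) * (1 - z ^ 2) ^ (-(1/2) - 1/p : ℝ) := by
        rw [show (1 - z ^ 2) * (1 - z ^ 2) ^ (-(1/2) - 1/p : ℝ)
            = (1 - z ^ 2) ^ ((1:ℝ) + (-(1/2) - 1/p)) by
          rw [Real.rpow_add ht, Real.rpow_one]]
        congr 1; ring
      simp only [hD]
      rw [E]
      ring
    rw [intervalIntegral.integral_eq_sub_of_hasDerivAt hderiv
      (hD_int.mono_set (by
        rw [Set.uIcc_of_le hb.1.le, Set.uIcc_of_le zero_le_one]
        exact Set.Icc_subset_Icc le_rfl hb.2.le))]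
    simp
  have T1 : Tendsto (fun b => ∫ z in (0:ℝ)..b, D z)
      (nhdsWithin (1:ℝ) (Set.Ioo (0:ℝ) 1)) (nhds (∫ z in (0:ℝ)..1, D z)) := by
    have hprim := intervalIntegral.continuousOn_primitive_interval'
      (a := 0) (b₁ := 0) (b₂ := 1) hD_int (by simp)
    have := (hprim 1 (by rw [Set.uIcc_of_le zero_le_one]; exact ⟨zero_le_one, le_rfl⟩))
    exact this.tendsto.mono_left (nhdsWithin_mono 1
      (by rw [Set.uIcc_of_le zero_le_one]; exact Set.Ioo_subset_Icc_self))
  have T2 : Tendsto (fun b : ℝ => b * (1 - b ^ 2) ^ ((1/2) - 1/p : ℝ))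
      (nhdsWithin (1:ℝ) (Set.Ioo (0:ℝ) 1)) (nhds 0) := by
    have hc : ContinuousAt (fun b : ℝ => b * (1 - b ^ 2) ^ ((1/2) - 1/p : ℝ)) 1 :=
      continuousAt_id.mul
        ((continuousAt_const.sub (continuousAt_id.pow 2)).rpow_const (Or.inr (ha_pos hp2).le))
    have hval : (1:ℝ) * ((1:ℝ) - 1 ^ 2) ^ ((1/2) - 1/p : ℝ) = 0 := by
      rw [show (1:ℝ) - 1 ^ 2 = 0 by norm_num, Real.zero_rpow (ne_of_gt (ha_pos hp2)), mul_zero]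
    have h := hc.tendsto.mono_left (nhdsWithin_le_nhds (s := Set.Ioo (0:ℝ) 1))
    rwa [hval] at h
  exact tendsto_nhds_unique T1 (Filter.Tendsto.congr' hEq.symm T2)

lemma K1one_pos : 0 < K1one p := by
  rw [K1one]
  apply intervalIntegral_pos_of_pos_on (hB_int hp2) _ one_pos
  intro z hz
  exact Real.rpow_pos_of_pos (by nlinarith [hz.1, hz.2]) _

lemma limit_value :
    (∫ z in (0:ℝ)..1, (2 * (1 - z ^ 2) ^ ((1/2) - 1/p : ℝ)
      - (1 - z ^ 2) ^ (-(1/2) - 1/p : ℝ))) = -(K1one p) / (p - 1) := by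
  have hp : (1:ℝ) < p := by linarith
  set A := ∫ z in (0:ℝ)..1, (1 - z ^ 2) ^ ((1/2) - 1/p : ℝ) with hA
  set B := ∫ z in (0:ℝ)..1, (1 - z ^ 2) ^ (-(1/2) - 1/p : ℝ) with hB
  have hKB : K1one p = B := rfl
  have hz := ftc_zero hp2
  rw [intervalIntegral.integral_sub ((hA_int hp2).const_mul _) ((hB_int hp2).const_mul _),
    intervalIntegral.integral_const_mul, intervalIntegral.integral_const_mul] at hz
  rw [intervalIntegral.integral_sub ((hA_int hp2).const_mul 2) (hB_int hp2),
    intervalIntegral.integral_const_mul]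
  rw [hKB]
  have hp0 : p ≠ 0 := by positivity
  have hp1 : p - 1 ≠ 0 := by intro h; rw [sub_eq_zero] at h; linarith
  rw [eq_div_iff hp1]
  linear_combination p * hz + 2 * (A - B) * mul_inv_cancel₀ hp0

lemma tendsto_Qt (hpgt : 1 < p) :
    Tendsto (Qt p) (nhdsWithin 1 (Set.Iio 1)) (nhds (-(K1one p) / (p - 1))) := by
  have hIoo : Set.Ioo (0:ℝ) 1 ∈ nhdsWithin (1:ℝ) (Set.Iio 1) :=
    Ioo_mem_nhdsLT_of_mem ⟨zero_lt_one, le_rfl⟩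
  have hne1 : (-(1/p) : ℝ) ≠ 0 := by
    have : (0:ℝ) < 1/p := by positivity
    linarith
  have hne2 : (-(1/2) - 1/p : ℝ) ≠ 0 := by
    have h0 : (0:ℝ) < 1/p := by positivity
    exact ne_of_lt (by linarith)
  have hne3 : ((1/2) - 1/p : ℝ) ≠ 0 := ne_of_gt (ha_pos hp2)
  have hDCT : Tendsto (fun q => ∫ z in (0:ℝ)..1, g (q * z) * (1 - z ^ 2) ^ (-(1 / p)))
      (nhdsWithin 1 (Set.Iio 1))
      (nhds (∫ z in (0:ℝ)..1, (2 * (1 - z ^ 2) ^ ((1/2) - 1/p : ℝ)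
        - (1 - z ^ 2) ^ (-(1/2) - 1/p : ℝ)))) := by
    apply intervalIntegral.tendsto_integral_filter_of_dominated_convergence
      (bound := fun z => 2 * (1 - z ^ 2) ^ (-(1/p) : ℝ) + (1 - z ^ 2) ^ (-(1/2) - 1/p : ℝ))
    · filter_upwards [hIoo] with q hq
      rw [Set.uIoc_of_le (zero_le_one' ℝ)]
      exact (integrable_gw hpgt ⟨hq.1.le, hq.2⟩).1.1
    · filter_upwards [hIoo] with q hq
      apply MeasureTheory.ae_of_all
      intro x hx
      rw [Set.uIoc_of_le (zero_le_one' ℝ)] at hx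
      rcases eq_or_lt_of_le hx.2 with h1 | h1
      · subst h1
        rw [show (1:ℝ) - 1 ^ 2 = 0 by norm_num, Real.zero_rpow hne1, Real.zero_rpow hne2]
        simp
      · have ht : 0 < 1 - x ^ 2 := by nlinarith [hx.1]
        have hq1 : q ^ 2 ≤ 1 := by nlinarith [hq.1, hq.2]
        have hq2 : 1 - x ^ 2 ≤ 1 - q ^ 2 * x ^ 2 := by
          have := mul_le_mul_of_nonneg_right hq1 (sq_nonneg x)
          linarith
        have hpos : 0 < 1 - q ^ 2 * x ^ 2 := lt_of_lt_of_le ht hq2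
        have e : (q * x) ^ 2 = q ^ 2 * x ^ 2 := by ring
        have hqx : (0:ℝ) ≤ q ^ 2 * x ^ 2 := by positivity
        have b1 : (1 - (q*x) ^ 2) ^ ((1/2) : ℝ) ≤ 1 := by
          rw [e]
          exact Real.rpow_le_one (by linarith) (by linarith) (by norm_num)
        have b2 : (1 - (q*x) ^ 2) ^ (-(1/2) : ℝ) ≤ (1 - x ^ 2) ^ (-(1/2) : ℝ) := by
          rw [e]; exact Real.rpow_le_rpow_of_nonpos ht hq2 (by norm_num)
        have n1 : 0 ≤ (1 - (q*x) ^ 2) ^ ((1/2) : ℝ) := Real.rpow_nonneg (by rw [e]; linarith) _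
        have n2 : 0 ≤ (1 - (q*x) ^ 2) ^ (-(1/2) : ℝ) := Real.rpow_nonneg (by rw [e]; linarith) _
        have hgb : |g (q * x)| ≤ 2 + (1 - x ^ 2) ^ (-(1/2) : ℝ) := by
          simp only [g]
          rw [abs_sub_comm]
          calc |(1 - (q*x)^2) ^ (-(1/2):ℝ) - 2 * (1 - (q*x)^2) ^ ((1/2):ℝ)|
              ≤ |(1 - (q*x)^2) ^ (-(1/2):ℝ)| + |2 * (1 - (q*x)^2) ^ ((1/2):ℝ)| := abs_sub _ _
            _ ≤ 2 + (1 - x ^ 2) ^ (-(1/2) : ℝ) := by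
                rw [abs_of_nonneg n2, abs_of_nonneg (by positivity)]
                nlinarith
        have hwnn : 0 ≤ (1 - x ^ 2) ^ (-(1/p) : ℝ) := Real.rpow_nonneg (by linarith) _
        have E : (1 - x ^ 2) ^ (-(1/2) : ℝ) * (1 - x ^ 2) ^ (-(1/p) : ℝ)
            = (1 - x ^ 2) ^ (-(1/2) - 1/p : ℝ) := by
          rw [← Real.rpow_add ht]; congr 1 <;> ring
        calc ‖g (q * x) * (1 - x ^ 2) ^ (-(1/p) : ℝ)‖
            = |g (q * x)| * (1 - x ^ 2) ^ (-(1/p) : ℝ) := by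
              rw [norm_mul, Real.norm_eq_abs, Real.norm_eq_abs, abs_of_nonneg hwnn]
          _ ≤ (2 + (1 - x ^ 2) ^ (-(1/2) : ℝ)) * (1 - x ^ 2) ^ (-(1/p) : ℝ) :=
              mul_le_mul_of_nonneg_right hgb hwnn
          _ = 2 * (1 - x ^ 2) ^ (-(1/p) : ℝ) + (1 - x ^ 2) ^ (-(1/2) - 1/p : ℝ) := by
              rw [add_mul, E]
    · have h2 : IntervalIntegrable (fun z : ℝ => (1 - z ^ 2) ^ (-(1/p) : ℝ)) volume 0 1 := by
        have h := key_integrable (exp_neg1 hpgt) (exp_neg0 hpgt) (φ := fun _ => 1) (C := 1)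
          continuousOn_const (by intro z _; norm_num)
        simpa using h
      exact (h2.const_mul 2).add (hB_int hp2)
    · apply MeasureTheory.ae_of_all
      intro x hx
      rw [Set.uIoc_of_le (zero_le_one' ℝ)] at hx
      rcases eq_or_lt_of_le hx.2 with h1 | h1
      · subst h1
        have hz0 : (1:ℝ) - 1 ^ 2 = 0 := by norm_num
        simp only [hz0, Real.zero_rpow hne1, Real.zero_rpow hne2, Real.zero_rpow hne3,
          mul_zero, zero_sub, neg_zero, sub_zero]
        simpa using tendsto_const_nhds
      · have ht : 0 < 1 - x ^ 2 := by nlinarith [hx.1]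
        have hne : (1:ℝ) - (1 * x) ^ 2 ≠ 0 := by rw [one_mul]; exact ht.ne'
        have hb : ContinuousAt (fun q : ℝ => 1 - (q * x) ^ 2) 1 := by fun_prop
        have hcont : ContinuousAt
            (fun q : ℝ => (2 * (1 - (q * x) ^ 2) ^ ((1/2):ℝ)
              - (1 - (q * x) ^ 2) ^ (-(1/2):ℝ)) * (1 - x ^ 2) ^ (-(1/p) : ℝ)) 1 := by
          have c1 : ContinuousAt (fun q : ℝ => 2 * (1 - (q * x) ^ 2) ^ ((1/2):ℝ)) 1 :=
            (hb.rpow_const (Or.inl hne)).const_mul 2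
          have c2 : ContinuousAt (fun q : ℝ => (1 - (q * x) ^ 2) ^ (-(1/2):ℝ)) 1 :=
            hb.rpow_const (Or.inl hne)
          exact (c1.sub c2).mul continuousAt_const
        have hval : (2 * (1 - (1 * x) ^ 2) ^ ((1/2):ℝ)
              - (1 - (1 * x) ^ 2) ^ (-(1/2):ℝ)) * (1 - x ^ 2) ^ (-(1/p) : ℝ)
            = 2 * (1 - x ^ 2) ^ ((1/2) - 1/p : ℝ) - (1 - x ^ 2) ^ (-(1/2) - 1/p : ℝ) := by
          rw [one_mul, sub_mul, mul_assoc, ← Real.rpow_add ht, ← Real.rpow_add ht]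
          rw [show ((1/2 : ℝ) + -(1/p)) = (1/2) - 1/p from by ring,
            show ((-(1/2) : ℝ) + -(1/p)) = -(1/2) - 1/p from by ring]
        have h := hcont.tendsto.mono_left
          (nhdsWithin_le_nhds (s := Set.Iio (1:ℝ)))
        rw [hval] at h
        apply h.congr
        intro q
        simp only [g]
  have hQev : (fun q => ∫ z in (0:ℝ)..1, g (q * z) * (1 - z ^ 2) ^ (-(1 / p)))
      =ᶠ[nhdsWithin 1 (Set.Iio 1)] Qt p := by
    filter_upwards [hIoo] with q hq
    exact (Qt_eq hpgt ⟨hq.1.le, hq.2⟩).symm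
  rw [← limit_value hp2]
  exact Filter.Tendsto.congr' hQev hDCT

end Limit

end QtAux

theorem Qt_strictAnti_strictConcave (p : ℝ) (hp : 1 < p) :
    StrictAntiOn (Qt p) (Set.Ico (0:ℝ) 1) ∧
    StrictConcaveOn ℝ (Set.Ico (0:ℝ) 1) (Qt p) ∧
    (2 < p →
      Tendsto (Qt p) (nhdsWithin 1 (Set.Iio 1)) (nhds (-(K1one p) / (p - 1))) ∧
      -(K1one p) / (p - 1) < 0) := by
  refine ⟨QtAux.Qt_anti hp, QtAux.Qt_concave hp, fun hp2 => ⟨QtAux.tendsto_Qt hp2 hp, ?_⟩⟩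
  have hB := QtAux.K1one_pos hp2
  have h1 : (0:ℝ) < p - 1 := by linarith
  exact div_neg_of_neg_of_pos (by linarith) h1
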